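/- Let V be a type, d : V → V → ℝ satisfy the directed triangle inequality, and let R be a finite set of vertices of V. Fix v ∈ V and define B⁴_out(v) = { u ∈ V : for all r ∈ R, 4·d(v,r) + d(r,u) > 4·d(v,u) + 3·d(u,r) }. If u ∉ B⁴_out(v), then there exists r ∈ R such that d(r,u) + d(u,r) ≤ 4·(d(u,v) + d(v,u)). -/
import Mathlib

/-- 4-approximation corollary (Corollary 5.8): if `u ∉ B⁴_out(v)`, then some eliminator
`r ∈ R` has roundtrip distance to `u` at most `4·d(u⇌v)`. -/
theorem four_approximation {V : Type*} (d : V → V → ℝ)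
    (htri : ∀ a b c : V, d a c ≤ d a b + d b c)
    (R : Finset V) (v u : V)
    (hu : u ∉ {u : V | ∀ r ∈ R, 4 * d v r + d r u > 4 * d v u + 3 * d u r}) :
    ∃ r ∈ R, d r u + d u r ≤ 4 * (d u v + d v u) := by
  simp only [Set.mem_setOf_eq, not_forall, not_lt] at hu
  obtain ⟨r, hr, h⟩ := hu
  refine ⟨r, hr, ?_⟩
  have h1 := htri u v r
  linarith
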